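/- Let G be a finite group and A ≤ Sym(G) a permutation group containing all right multiplications of G. Then the ℤ-span of the elements ⟨X⟩ := Σ_{x∈X} x of the integer group ring ℤG, where X ranges over the orbits of the point stabilizer A_{1} on G, is a subring of ℤG (Schur's theorem on transitivity modules). -/

import Mathlib

open scoped Pointwise

noncomputable def clsum {G : Type*} [Group G] [Fintype G] (s : Set G) :
    MonoidAlgebra ℤ G :=
  ∑ x ∈ s.toFinite.toFinset, MonoidAlgebra.of ℤ G x

section aux
variable {G : Type*} [Group G] [Fintype G]
set_option linter.unusedSectionVars false

lemma clsum_apply (s : Set G) (t : G) [DecidablePred (· ∈ s)] :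
    (clsum s).coeff t = if t ∈ s then 1 else 0 := by
  classical
  rw [clsum, MonoidAlgebra.coeff_sum, Finset.sum_apply']
  simp only [MonoidAlgebra.of_apply, MonoidAlgebra.coeff_single, Finsupp.single_apply]
  rw [Finset.sum_ite_eq']
  simp only [Set.Finite.mem_toFinset]

variable (A : Subgroup (Equiv.Perm G))

/-- invariance predicate -/
def IsInv (A : Subgroup (Equiv.Perm G)) (f : MonoidAlgebra ℤ G) : Prop :=
  ∀ σ : Equiv.Perm G, σ ∈ A → σ 1 = 1 → ∀ g, f.coeff (σ g) = f.coeff g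

lemma isInv_mul (hA : ∀ g : G, Equiv.mulRight g ∈ A) {f h : MonoidAlgebra ℤ G}
    (hf : IsInv A f) (hh : IsInv A h) : IsInv A (f * h) := by
  intro σ hσ h1 g
  have key : ∀ y : G, f.coeff (σ g * (σ y)⁻¹) = f.coeff (g * y⁻¹) := by
    intro y
    set τ : Equiv.Perm G := Equiv.mulRight ((σ y)⁻¹) * σ * Equiv.mulRight y with hτ
    have hτA : τ ∈ A := A.mul_mem (A.mul_mem (hA _) hσ) (hA _)
    have hτ1 : τ 1 = 1 := by simp [hτ]
    have := hf τ hτA hτ1 (g * y⁻¹)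
    simpa [hτ, inv_mul_cancel_right] using this
  have expand : ∀ x : G, (f * h).coeff x = ∑ y : G, f.coeff (x * y⁻¹) * h.coeff y := by
    intro x
    rw [MonoidAlgebra.coeff_mul_apply_right, Finsupp.sum_fintype]
    intro a; simp
  rw [expand, expand]
  rw [← Equiv.sum_comp σ (fun y => f.coeff (σ g * y⁻¹) * h.coeff y)]
  apply Finset.sum_congr rfl
  intro y _
  rw [key y, hh σ hσ h1 y]

lemma isInv_one : IsInv A (1 : MonoidAlgebra ℤ G) := by
  classical
  intro σ hσ h1 g
  rw [MonoidAlgebra.one_def, MonoidAlgebra.coeff_single, Finsupp.single_apply, Finsupp.single_apply]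
  by_cases hg : g = 1
  · subst hg; rw [if_pos h1.symm, if_pos rfl]
  · rw [if_neg (fun h => hg (σ.injective (by rw [← h, h1]))), if_neg (fun h => hg h.symm)]

/-- The invariant subring -/
def invRing (hA : ∀ g : G, Equiv.mulRight g ∈ A) : Subring (MonoidAlgebra ℤ G) where
  carrier := {f | IsInv A f}
  zero_mem' := by intro σ _ _ g; rfl
  one_mem' := isInv_one A
  add_mem' := by
    intro f h hf hh σ hσ h1 g
    show f.coeff (σ g) + h.coeff (σ g) = f.coeff g + h.coeff g
    rw [hf σ hσ h1 g, hh σ hσ h1 g]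
  neg_mem' := by
    intro f hf σ hσ h1 g
    show -(f.coeff (σ g)) = -(f.coeff g)
    rw [hf σ hσ h1 g]
  mul_mem' := fun hf hh => isInv_mul A hA hf hh

lemma mem_orbit_iff_of_inv {σ : Equiv.Perm G} (hσ : σ ∈ A) (h1 : σ 1 = 1) (g x : G) :
    σ x ∈ MulAction.orbit (MulAction.stabilizer A (1 : G)) g ↔
      x ∈ MulAction.orbit (MulAction.stabilizer A (1 : G)) g := by
  have hs : (⟨σ, hσ⟩ : A) ∈ MulAction.stabilizer A (1 : G) := h1
  set s : MulAction.stabilizer A (1 : G) := ⟨⟨σ, hσ⟩, hs⟩ with hsdef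
  have hsx : ∀ y : G, s • y = σ y := fun _ => rfl
  constructor
  · rintro ⟨a, ha⟩
    have ha' : a • g = σ x := ha
    refine ⟨s⁻¹ * a, ?_⟩
    show (s⁻¹ * a) • g = x
    rw [mul_smul, ha', ← hsx x, inv_smul_smul]
  · rintro ⟨a, ha⟩
    have ha' : a • g = x := ha
    refine ⟨s * a, ?_⟩
    show (s * a) • g = σ x
    rw [mul_smul, ha', hsx]

lemma isInv_clsum_orbit (g : G) :
    IsInv A (clsum (MulAction.orbit (MulAction.stabilizer A (1 : G)) g)) := by
  classical
  intro σ hσ h1 x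
  rw [clsum_apply, clsum_apply]
  rw [if_congr (mem_orbit_iff_of_inv A hσ h1 g x) rfl rfl]

end aux

/-- Schur's theorem on transitivity modules. -/
theorem stmt3 {G : Type*} [Group G] [Fintype G] (A : Subgroup (Equiv.Perm G))
    (hA : ∀ g : G, Equiv.mulRight g ∈ A) :
    ∃ R : Subring (MonoidAlgebra ℤ G),
      (R : Set (MonoidAlgebra ℤ G)) =
        (Submodule.span ℤ
          (Set.range fun g : G =>
            clsum (MulAction.orbit (MulAction.stabilizer A (1 : G)) g)) :
          Set (MonoidAlgebra ℤ G)) := by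
  classical
  refine ⟨invRing A hA, Set.Subset.antisymm ?_ ?_⟩
  · -- invariant ⊆ span
    intro f hf
    simp only [SetLike.mem_coe] at hf
    have hf' : IsInv A f := hf
    set St := MulAction.stabilizer A (1 : G)
    set Q := Quotient (MulAction.orbitRel St G)
    have hconst : ∀ (x y : G), x ∈ MulAction.orbit St y → f.coeff x = f.coeff y := by
      rintro x y ⟨a, rfl⟩
      exact hf' ((a : A) : Equiv.Perm G) ((a : A)).2 a.2 y
    have hsum : f = ∑ q : Q, f.coeff q.out • clsum (MulAction.orbit St q.out) := by
      ext x
      rw [MonoidAlgebra.coeff_sum, Finset.sum_apply']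
      have : ∀ q : Q, (f.coeff q.out • clsum (MulAction.orbit St q.out)).coeff x
          = if (⟦x⟧ : Q) = q then f.coeff q.out else 0 := by
        intro q
        rw [MonoidAlgebra.coeff_smul_apply, clsum_apply, smul_eq_mul, mul_ite, mul_one, mul_zero]
        apply if_congr _ rfl rfl
        rw [← Quotient.out_eq q, Quotient.eq, Quotient.out_eq]
        rfl
      rw [Finset.sum_congr rfl (fun q _ => this q), Finset.sum_ite_eq]
      simp only [Finset.mem_univ, if_true]
      apply hconst
      have : (⟦x⟧ : Q) = ⟦(⟦x⟧ : Q).out⟧ := (Quotient.out_eq _).symm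
      exact Quotient.eq.mp this
    rw [hsum]
    apply Submodule.sum_mem
    intro q _
    exact Submodule.smul_mem _ _ (Submodule.subset_span ⟨q.out, rfl⟩)
  · -- span ⊆ invariant
    intro f hf
    simp only [SetLike.mem_coe] at hf ⊢
    induction hf using Submodule.span_induction with
    | mem x hx =>
      obtain ⟨g, rfl⟩ := hx
      exact isInv_clsum_orbit A g
    | zero => exact zero_mem _
    | add x y _ _ hx hy => exact add_mem hx hy
    | smul c x _ hx => exact zsmul_mem hx c
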